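/- Let 1 < p < ∞ and -1 ≤ θ ≤ 1. Then the limit as t → 0⁺ of [(t² + 2θt + 1)^{p/2} - 1 - pθt] / [t²(1+t)^{p-2}] equals (p/2)(1 + (p-2)θ²), and this value is strictly positive. -/

import Mathlib

open Real Filter

theorem stmt_3 (p θ : ℝ) (hp : 1 < p) (hθ₁ : -1 ≤ θ) (hθ₂ : θ ≤ 1) :
    Tendsto (fun t : ℝ =>
        ((t ^ 2 + 2 * θ * t + 1) ^ (p / 2) - 1 - p * θ * t) / (t ^ 2 * (1 + t) ^ (p - 2)))
      (nhdsWithin 0 (Set.Ioi 0)) (nhds ((p / 2) * (1 + (p - 2) * θ ^ 2))) ∧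
    0 < (p / 2) * (1 + (p - 2) * θ ^ 2) := by
  have hθsq : θ ^ 2 ≤ 1 := by nlinarith
  have hpos : 0 < (p / 2) * (1 + (p - 2) * θ ^ 2) := by
    have h1 : 0 < 1 + (p - 2) * θ ^ 2 := by
      rcases le_total p 2 with h | h
      · nlinarith [sq_nonneg θ]
      · nlinarith [sq_nonneg θ]
    positivity
  refine ⟨?_, hpos⟩
  set L : ℝ := (p / 2) * (1 + (p - 2) * θ ^ 2) with hL
  set Q : ℝ → ℝ := fun y => y ^ 2 + 2 * θ * y + 1 with hQdef
  have hQpos : ∀ x ∈ Set.Ioo (0:ℝ) (1/2), 0 < Q x := by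
    intro x hx
    have := hx.1; have := hx.2
    simp only [hQdef]
    nlinarith [sq_nonneg (1 - x), sq_nonneg (1 + x)]
  have hQ' : ∀ x : ℝ, HasDerivAt Q (2 * x + 2 * θ) x := by
    intro x
    have h := ((hasDerivAt_pow 2 x).add ((hasDerivAt_id x).const_mul (2*θ))).add_const 1
    refine h.congr_deriv ?_
    ring
  set f : ℝ → ℝ := fun y => Q y ^ (p / 2) - 1 - p * θ * y with hfdef
  set f1 : ℝ → ℝ := fun y => (2 * y + 2 * θ) * (p / 2) * Q y ^ (p / 2 - 1) - p * θ with hf1def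
  set f2 : ℝ → ℝ := fun y =>
    2 * (p / 2) * Q y ^ (p / 2 - 1)
      + (2 * y + 2 * θ) * (p / 2) * ((2 * y + 2 * θ) * (p / 2 - 1) * Q y ^ (p / 2 - 1 - 1))
    with hf2def
  -- derivatives on Ioo 0 (1/2)
  have hff1 : ∀ x ∈ Set.Ioo (0:ℝ) (1/2), HasDerivAt f (f1 x) x := by
    intro x hx
    have hQne : Q x ≠ 0 := (hQpos x hx).ne'
    have h1 : HasDerivAt (fun y => Q y ^ (p/2)) ((2*x+2*θ) * (p/2) * Q x ^ (p/2 - 1)) x :=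
      (hQ' x).rpow_const (Or.inl hQne)
    have h2 := ((h1.sub_const 1).sub ((hasDerivAt_id x).const_mul (p*θ)))
    refine h2.congr_deriv ?_
    simp only [hf1def]
    try ring
  have hf1f2 : ∀ x ∈ Set.Ioo (0:ℝ) (1/2), HasDerivAt f1 (f2 x) x := by
    intro x hx
    have hQne : Q x ≠ 0 := (hQpos x hx).ne'
    have h1 : HasDerivAt (fun y => (2 * y + 2 * θ) * (p / 2)) (2 * (p/2)) x := by
      have := (((hasDerivAt_id x).const_mul 2).add_const (2*θ)).mul_const (p/2)
      exact this.congr_deriv (by ring)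
    have h2 : HasDerivAt (fun y => Q y ^ (p/2 - 1)) ((2*x+2*θ) * (p/2-1) * Q x ^ (p/2-1-1)) x :=
      (hQ' x).rpow_const (Or.inl hQne)
    have h3 := (h1.mul h2).sub_const (p*θ)
    refine h3.congr_deriv ?_
    try simp only [hf2def]
    try ring
  -- tendsto facts
  have hQ0 : Q 0 = 1 := by simp [hQdef]
  have hQcont : ∀ x : ℝ, ContinuousAt Q x := fun x => (hQ' x).continuousAt
  have hf_to0 : Tendsto f (nhdsWithin 0 (Set.Ioi 0)) (nhds 0) := by
    have : ContinuousAt f 0 := by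
      apply ContinuousAt.sub
      apply ContinuousAt.sub
      · exact (hQcont 0).rpow_const (Or.inl (by rw [hQ0]; norm_num))
      · exact continuousAt_const
      · exact continuousAt_const.mul continuousAt_id
    have h0 : f 0 = 0 := by simp [hfdef, hQ0]
    have h := this.tendsto.mono_left (nhdsWithin_le_nhds (s := Set.Ioi (0:ℝ)))
    rwa [h0] at h
  have hf1_to0 : Tendsto f1 (nhdsWithin 0 (Set.Ioi 0)) (nhds 0) := by
    have : ContinuousAt f1 0 := by
      have hr1 : ContinuousAt (fun y => Q y ^ (p/2 - 1)) 0 :=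
        (hQcont 0).rpow_const (Or.inl (by rw [hQ0]; norm_num))
      have hlin : ContinuousAt (fun y : ℝ => (2 * y + 2 * θ) * (p / 2)) 0 := by fun_prop
      exact (hlin.mul hr1).sub continuousAt_const
    have h0 : f1 0 = 0 := by simp [hf1def, hQ0]; ring
    have h := this.tendsto.mono_left (nhdsWithin_le_nhds (s := Set.Ioi (0:ℝ)))
    rwa [h0] at h
  have hg_to0 : Tendsto (fun t : ℝ => t ^ 2) (nhdsWithin 0 (Set.Ioi 0)) (nhds 0) := by
    have : ContinuousAt (fun t : ℝ => t ^ 2) 0 := by fun_prop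
    simpa using this.tendsto.mono_left nhdsWithin_le_nhds
  have hg1_to0 : Tendsto (fun t : ℝ => 2 * t) (nhdsWithin 0 (Set.Ioi 0)) (nhds 0) := by
    have : ContinuousAt (fun t : ℝ => 2 * t) 0 := by fun_prop
    simpa using this.tendsto.mono_left nhdsWithin_le_nhds
  have hf2div : Tendsto (fun x => f2 x / 2) (nhdsWithin 0 (Set.Ioi 0)) (nhds L) := by
    have hc : ContinuousAt (fun x => f2 x / 2) 0 := by
      apply ContinuousAt.div_const
      have hr1 : ContinuousAt (fun y => Q y ^ (p/2 - 1)) 0 :=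
        (hQcont 0).rpow_const (Or.inl (by rw [hQ0]; norm_num))
      have hr2 : ContinuousAt (fun y => Q y ^ (p/2 - 1 - 1)) 0 :=
        (hQcont 0).rpow_const (Or.inl (by rw [hQ0]; norm_num))
      have hlin : ContinuousAt (fun y : ℝ => 2 * y + 2 * θ) 0 := by fun_prop
      exact (continuousAt_const.mul hr1).add
        ((hlin.mul continuousAt_const).mul ((hlin.mul continuousAt_const).mul hr2))
    have h0 : f2 0 / 2 = L := by
      simp [hf2def, hQ0, hL]; ring
    exact h0 ▸ hc.tendsto.mono_left nhdsWithin_le_nhds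
  -- second L'Hopital
  have hstep1 : Tendsto (fun x => f1 x / (2 * x)) (nhdsWithin 0 (Set.Ioi 0)) (nhds L) := by
    refine HasDerivAt.lhopital_zero_right_on_Ioo (g' := fun _ => 2)
      (by norm_num : (0:ℝ) < 1/2) hf1f2
      (fun x _ => by simpa using (hasDerivAt_id x).const_mul 2)
      (fun x _ => two_ne_zero) hf1_to0 hg1_to0 hf2div
  -- first L'Hopital
  have hstep2 : Tendsto (fun x => f x / x ^ 2) (nhdsWithin 0 (Set.Ioi 0)) (nhds L) := by
    refine HasDerivAt.lhopital_zero_right_on_Ioo (g' := fun x => 2 * x)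
      (by norm_num : (0:ℝ) < 1/2) hff1
      (fun x _ => by simpa using hasDerivAt_pow 2 x)
      (fun x hx => by have := hx.1; positivity) hf_to0 hg_to0 hstep1
  -- the factor (1+t)^(p-2) tends to 1
  have hfac : Tendsto (fun t : ℝ => (1 + t) ^ (p - 2)) (nhdsWithin 0 (Set.Ioi 0)) (nhds 1) := by
    have hc : ContinuousAt (fun t : ℝ => (1 + t) ^ (p - 2)) 0 := by
      apply ContinuousAt.rpow_const
      · fun_prop
      · left; norm_num
    simpa using hc.tendsto.mono_left nhdsWithin_le_nhds
  have := hstep2.div hfac one_ne_zero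
  rw [div_one] at this
  refine this.congr (fun t => ?_)
  simp only [Pi.div_apply, div_div, hfdef, hQdef]
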